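/- Let k be a field of characteristic 2, q a power of 2, and D_{4q} = ⟨x, y ∣ x² = y² = 1, (xy)^q = (yx)^q⟩ the dihedral 2-group of order 4q. Writing X = x − 1 and Y = y − 1 in kD_{4q}, there is a k-algebra isomorphism kD_{4q} ≅ Λ/((XY)^q − (YX)^q), where Λ = k⟨X, Y⟩/(X², Y²) is the quotient of the free associative algebra on two non-commuting variables. -/

import Mathlib

open MonoidAlgebra

/-- The defining relations of `Λ/((XY)^q - (YX)^q)` where `Λ = k⟨X,Y⟩/(X², Y²)`:
`X² = 0`, `Y² = 0` and `(XY)^q = (YX)^q`, imposed on the free algebra on two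
non-commuting variables `X` (index `0`) and `Y` (index `1`). -/
inductive DihedralRel (k : Type*) [CommRing k] (q : ℕ) :
    FreeAlgebra k (Fin 2) → FreeAlgebra k (Fin 2) → Prop
  | x_sq : DihedralRel k q (FreeAlgebra.ι k (0 : Fin 2) * FreeAlgebra.ι k (0 : Fin 2)) 0
  | y_sq : DihedralRel k q (FreeAlgebra.ι k (1 : Fin 2) * FreeAlgebra.ι k (1 : Fin 2)) 0
  | comm : DihedralRel k q ((FreeAlgebra.ι k (0 : Fin 2) * FreeAlgebra.ι k (1 : Fin 2)) ^ q)
      ((FreeAlgebra.ι k (1 : Fin 2) * FreeAlgebra.ι k (0 : Fin 2)) ^ q)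

section Aux

variable {S : Type*} [Ring S]

private lemma dga_pow_mod {M : Type*} [Monoid M] (u : M) {N : ℕ} (h : u ^ N = 1) (n : ℕ) :
    u ^ n = u ^ (n % N) := by
  conv_lhs => rw [← Nat.mod_add_div n N]
  rw [pow_add, pow_mul, h, one_pow, mul_one]

private lemma dga_frob2 (h2 : (2 : S) = 0) {a b : S} (h : Commute a b) (m : ℕ) :
    (a + b) ^ 2 ^ m = a ^ 2 ^ m + b ^ 2 ^ m := by
  rw [h.add_pow_prime_pow_eq Nat.prime_two m]
  push_cast
  rw [h2]; simp

private lemma dga_eq_of_add_eq_zero (h2 : (2 : S) = 0) {x y : S} (h : x + y = 0) : x = y := by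
  have hyy : y + y = 0 := by rw [← two_mul, h2, zero_mul]
  rw [← neg_eq_of_add_eq_zero_left h, neg_eq_of_add_eq_zero_left hyy]

private lemma dga_sq_one (h2 : (2 : S) = 0) {X : S} (hX : X * X = 0) :
    (1 + X) * (1 + X) = 1 := by
  have h : (1 + X) * (1 + X) = 1 + 2 * X + X * X := by noncomm_ring
  rw [h, hX, h2, zero_mul, add_zero, add_zero]

private lemma dga_key (h2 : (2 : S) = 0) {X Y : S} (hX : X * X = 0) (hY : Y * Y = 0) (m : ℕ) :
    (X * Y) ^ 2 ^ m + (Y * X) ^ 2 ^ m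
      = ((1 + X) * (1 + Y)) ^ 2 ^ m + ((1 + Y) * (1 + X)) ^ 2 ^ m := by
  have hxx := dga_sq_one h2 hX
  have hyy := dga_sq_one h2 hY
  have hCD : ((1 + X) * (1 + Y)) * ((1 + Y) * (1 + X)) = 1 := by
    rw [mul_assoc, ← mul_assoc (1 + Y) (1 + Y), hyy, one_mul, hxx]
  have hDC : ((1 + Y) * (1 + X)) * ((1 + X) * (1 + Y)) = 1 := by
    rw [mul_assoc, ← mul_assoc (1 + X) (1 + X), hxx, one_mul, hyy]
  have hAB : (X * Y) * (Y * X) = 0 := by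
    rw [mul_assoc, ← mul_assoc Y Y, hY, zero_mul, mul_zero]
  have hBA : (Y * X) * (X * Y) = 0 := by
    rw [mul_assoc, ← mul_assoc X X, hX, zero_mul, mul_zero]
  have c1 : Commute (X * Y) (Y * X) := hAB.trans hBA.symm
  have c2 : Commute ((1 + X) * (1 + Y)) ((1 + Y) * (1 + X)) := hCD.trans hDC.symm
  have hsum : X * Y + Y * X = (1 + X) * (1 + Y) + (1 + Y) * (1 + X) := by
    have h : (1 + X) * (1 + Y) + (1 + Y) * (1 + X)
        = X * Y + Y * X + 2 * (1 + X + Y) := by noncomm_ring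
    rw [h, h2, zero_mul, add_zero]
  rw [← dga_frob2 h2 c1 m, hsum, dga_frob2 h2 c2 m]

private lemma dga_sq_sub (z : S) : (z - 1) * (z - 1) = z * z + 2 * (1 - z) - 1 := by
  noncomm_ring

end Aux

/-- Let `k` be a field of characteristic `2` and `q` a power of `2`.  Then there is a
`k`-algebra isomorphism `Λ/((XY)^q - (YX)^q) ≅ kD_{4q}` (with `D_{4q}` the dihedral group
of order `4q`) sending `X ↦ x - 1` and `Y ↦ y - 1`, where `x, y` are the two generating
reflections. -/
theorem dihedral_group_algebra_iso (k : Type*) [Field k] [CharP k 2] (q : ℕ)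
    (hq : ∃ m : ℕ, q = 2 ^ m) :
    ∃ e : RingQuot (DihedralRel k q) ≃ₐ[k] MonoidAlgebra k (DihedralGroup (2 * q)),
      e (RingQuot.mkAlgHom k (DihedralRel k q) (FreeAlgebra.ι k (0 : Fin 2))) =
        single (DihedralGroup.sr (0 : ZMod (2 * q))) (1 : k) - 1 ∧
      e (RingQuot.mkAlgHom k (DihedralRel k q) (FreeAlgebra.ι k (1 : Fin 2))) =
        single (DihedralGroup.sr (1 : ZMod (2 * q))) (1 : k) - 1 := by
  classical
  obtain ⟨m, hm⟩ := hq
  have hq0 : q ≠ 0 := by simp [hm]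
  haveI : NeZero (2 * q) := ⟨by omega⟩
  haveI : Fact (1 < 2 * q) := ⟨by omega⟩
  set A := MonoidAlgebra k (DihedralGroup (2 * q)) with hA
  set R := RingQuot (DihedralRel k q) with hR
  -- characteristic two facts
  have h2k : (2 : k) = 0 := by
    have := CharP.cast_eq_zero k 2; exact_mod_cast this
  have h2A : (2 : A) = 0 := by
    rw [← map_ofNat (algebraMap k A) 2, h2k, map_zero]
  have h2R : (2 : R) = 0 := by
    rw [← map_ofNat (algebraMap k R) 2, h2k, map_zero]
  -- the monoid algebra side
  set a : A := single (DihedralGroup.sr (0 : ZMod (2 * q))) (1 : k) with ha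
  set b : A := single (DihedralGroup.sr (1 : ZMod (2 * q))) (1 : k) with hb
  have ha2 : a * a = 1 := by
    rw [ha, MonoidAlgebra.single_mul_single, DihedralGroup.sr_mul_sr, sub_self, mul_one,
      ← DihedralGroup.one_def, ← MonoidAlgebra.one_def]
  have hb2 : b * b = 1 := by
    rw [hb, MonoidAlgebra.single_mul_single, DihedralGroup.sr_mul_sr, sub_self, mul_one,
      ← DihedralGroup.one_def, ← MonoidAlgebra.one_def]
  have hXA : (a - 1) * (a - 1) = 0 := by
    have h : (a - 1) * (a - 1) = a * a + 2 * (1 - a) - 1 := dga_sq_sub a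
    rw [h, ha2, h2A, zero_mul, add_zero, sub_self]
  have hYA : (b - 1) * (b - 1) = 0 := by
    have h : (b - 1) * (b - 1) = b * b + 2 * (1 - b) - 1 := dga_sq_sub b
    rw [h, hb2, h2A, zero_mul, add_zero, sub_self]
  have hone : ∀ z : A, 1 + (z - 1) = z := fun z => by rw [add_comm, sub_add_cancel]
  -- (ab)^q = (ba)^q in the monoid algebra
  have hab : a * b = single (DihedralGroup.r (1 : ZMod (2 * q))) (1 : k) := by
    rw [ha, hb, MonoidAlgebra.single_mul_single, DihedralGroup.sr_mul_sr, sub_zero, mul_one]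
  have hba : b * a = single (DihedralGroup.r (-1 : ZMod (2 * q))) (1 : k) := by
    rw [ha, hb, MonoidAlgebra.single_mul_single, DihedralGroup.sr_mul_sr, zero_sub, mul_one]
  have hrq : (DihedralGroup.r (1 : ZMod (2 * q))) ^ q = DihedralGroup.r (q : ZMod (2 * q)) :=
    DihedralGroup.r_one_pow q
  have hrnegq : (DihedralGroup.r (-1 : ZMod (2 * q))) ^ q
      = DihedralGroup.r (q : ZMod (2 * q)) := by
    have h1 : (DihedralGroup.r (-1 : ZMod (2 * q))) = (DihedralGroup.r (1 : ZMod (2 * q)))⁻¹ :=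
      rfl
    have h2 : ((q : ZMod (2 * q)) + (q : ZMod (2 * q))) = 0 := by
      have : (((2 * q : ℕ) : ZMod (2 * q))) = 0 := ZMod.natCast_self (2 * q)
      rw [← this]; push_cast; ring
    rw [h1, inv_pow, hrq]
    show (DihedralGroup.r (q : ZMod (2 * q)))⁻¹ = _
    have : (DihedralGroup.r (q : ZMod (2 * q)))⁻¹ = DihedralGroup.r (-(q : ZMod (2 * q))) := rfl
    rw [this, neg_eq_of_add_eq_zero_left h2]
  have hCqA : (a * b) ^ q = (b * a) ^ q := by
    rw [hab, hba, MonoidAlgebra.single_pow, MonoidAlgebra.single_pow, one_pow, hrq, hrnegq]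
  have hcommA : ((a - 1) * (b - 1)) ^ q = ((b - 1) * (a - 1)) ^ q := by
    apply dga_eq_of_add_eq_zero h2A
    have key := dga_key h2A hXA hYA m
    rw [hone a, hone b, ← hm] at key
    rw [key, hCqA, ← two_mul, h2A, zero_mul]
  -- the forward algebra homomorphism
  set fA : FreeAlgebra k (Fin 2) →ₐ[k] A := FreeAlgebra.lift k ![a - 1, b - 1] with hfA
  have hfA0 : fA (FreeAlgebra.ι k (0 : Fin 2)) = a - 1 := by
    rw [hfA, FreeAlgebra.lift_ι_apply]; rfl
  have hfA1 : fA (FreeAlgebra.ι k (1 : Fin 2)) = b - 1 := by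
    rw [hfA, FreeAlgebra.lift_ι_apply]; rfl
  have hrel : ∀ ⦃u v : FreeAlgebra k (Fin 2)⦄, DihedralRel k q u v → fA u = fA v := by
    intro u v h
    cases h with
    | x_sq => rw [map_mul, hfA0, hXA, map_zero]
    | y_sq => rw [map_mul, hfA1, hYA, map_zero]
    | comm => rw [map_pow, map_pow, map_mul, map_mul, hfA0, hfA1, hcommA]
  set f : R →ₐ[k] A := RingQuot.liftAlgHom k ⟨fA, hrel⟩ with hf
  have hfX : f (RingQuot.mkAlgHom k (DihedralRel k q) (FreeAlgebra.ι k (0 : Fin 2)))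
      = a - 1 := by rw [hf, RingQuot.liftAlgHom_mkAlgHom_apply, hfA0]
  have hfY : f (RingQuot.mkAlgHom k (DihedralRel k q) (FreeAlgebra.ι k (1 : Fin 2)))
      = b - 1 := by rw [hf, RingQuot.liftAlgHom_mkAlgHom_apply, hfA1]
  -- the RingQuot side
  set XR : R := RingQuot.mkAlgHom k (DihedralRel k q) (FreeAlgebra.ι k (0 : Fin 2)) with hXR
  set YR : R := RingQuot.mkAlgHom k (DihedralRel k q) (FreeAlgebra.ι k (1 : Fin 2)) with hYR
  have hX2 : XR * XR = 0 := by
    have := RingQuot.mkAlgHom_rel k (DihedralRel.x_sq (k := k) (q := q))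
    rw [map_mul, map_zero] at this; exact this
  have hY2 : YR * YR = 0 := by
    have := RingQuot.mkAlgHom_rel k (DihedralRel.y_sq (k := k) (q := q))
    rw [map_mul, map_zero] at this; exact this
  have hcommR : (XR * YR) ^ q = (YR * XR) ^ q := by
    have := RingQuot.mkAlgHom_rel k (DihedralRel.comm (k := k) (q := q))
    rw [map_pow, map_pow, map_mul, map_mul] at this; exact this
  set xR : R := 1 + XR with hxR
  set yR : R := 1 + YR with hyR
  set CR : R := xR * yR with hCR
  set DR : R := yR * xR with hDR
  have hxx : xR * xR = 1 := dga_sq_one h2R hX2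
  have hyy : yR * yR = 1 := dga_sq_one h2R hY2
  have hCD : CR * DR = 1 := by
    rw [hCR, hDR, mul_assoc, ← mul_assoc yR yR, hyy, one_mul, hxx]
  have hDC : DR * CR = 1 := by
    rw [hCR, hDR, mul_assoc, ← mul_assoc xR xR, hxx, one_mul, hyy]
  have hCqDq : CR ^ q = DR ^ q := by
    apply dga_eq_of_add_eq_zero h2R
    have key := dga_key h2R hX2 hY2 m
    rw [← hxR, ← hyR, ← hCR, ← hDR, ← hm] at key
    rw [← key, hcommR, ← two_mul, h2R, zero_mul]
  -- units
  set uU : Rˣ := ⟨CR, DR, hCD, hDC⟩ with huU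
  set xU : Rˣ := ⟨xR, xR, hxx, hxx⟩ with hxU
  have hu2q : uU ^ (2 * q) = 1 := by
    have h : uU ^ q = (uU⁻¹) ^ q := by
      apply Units.ext
      rw [Units.val_pow_eq_pow_val, Units.val_pow_eq_pow_val]
      exact hCqDq
    rw [two_mul, pow_add]
    nth_rewrite 1 [h]
    rw [inv_pow, inv_mul_cancel]
  have hxU2 : xU * xU = 1 := by apply Units.ext; exact hxx
  have hxUinv : xU⁻¹ = xU := inv_eq_of_mul_eq_one_right hxU2
  have hconj : xU * uU * xU = uU⁻¹ := by
    apply Units.ext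
    show xR * CR * xR = DR
    rw [hCR, ← mul_assoc, hxx, one_mul, hDR]
  have hsc : SemiconjBy xU uU uU⁻¹ := by
    show xU * uU = uU⁻¹ * xU
    calc xU * uU = xU * uU * (xU * xU) := by rw [hxU2, mul_one]
      _ = (xU * uU * xU) * xU := by rw [mul_assoc (xU * uU) xU xU]
      _ = uU⁻¹ * xU := by rw [hconj]
  have hsc2 : SemiconjBy xU uU⁻¹ uU := by
    have := hsc.inv_symm_left
    rwa [hxUinv] at this
  -- the group homomorphism
  set homZ : ZMod (2 * q) → Rˣ := fun i => uU ^ i.val with hhomZ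
  have hz_add : ∀ i j : ZMod (2 * q), homZ (i + j) = homZ i * homZ j := by
    intro i j
    show uU ^ (i + j).val = uU ^ i.val * uU ^ j.val
    rw [← pow_add, dga_pow_mod uU hu2q (i.val + j.val), ZMod.val_add]
  have hz_zero : homZ 0 = 1 := by
    show uU ^ (0 : ZMod (2 * q)).val = 1
    rw [ZMod.val_zero, pow_zero]
  have hz_neg : ∀ i : ZMod (2 * q), homZ (-i) = (homZ i)⁻¹ := by
    intro i
    refine eq_inv_of_mul_eq_one_left ?_
    rw [← hz_add, neg_add_cancel, hz_zero]
  have hz_x : ∀ i : ZMod (2 * q), homZ i * xU = xU * homZ (-i) := by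
    intro i
    rw [hz_neg]
    show uU ^ i.val * xU = xU * (uU ^ i.val)⁻¹
    rw [← inv_pow]
    exact (hsc2.pow_right i.val).symm
  set φ0 : DihedralGroup (2 * q) → Rˣ := fun g =>
    match g with
    | .r i => homZ i
    | .sr i => xU * homZ i
    with hφ0
  have hmul : ∀ g h : DihedralGroup (2 * q), φ0 (g * h) = φ0 g * φ0 h := by
    rintro (i | i) (j | j)
    · rw [DihedralGroup.r_mul_r]; exact hz_add i j
    · rw [DihedralGroup.r_mul_sr]
      show xU * homZ (j - i) = homZ i * (xU * homZ j)
      rw [← mul_assoc, hz_x i, mul_assoc, ← hz_add, neg_add_eq_sub]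
    · rw [DihedralGroup.sr_mul_r]
      show xU * homZ (i + j) = (xU * homZ i) * homZ j
      rw [mul_assoc, hz_add]
    · rw [DihedralGroup.sr_mul_sr]
      show homZ (j - i) = (xU * homZ i) * (xU * homZ j)
      rw [mul_assoc, ← mul_assoc (homZ i), hz_x i, ← mul_assoc, ← mul_assoc, hxU2, one_mul,
        ← hz_add, neg_add_eq_sub]
  set φ : DihedralGroup (2 * q) →* R :=
    (Units.coeHom R).comp
      { toFun := φ0
        map_one' := by
          show φ0 (DihedralGroup.r 0) = 1
          show homZ 0 = 1
          exact hz_zero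
        map_mul' := hmul } with hφ
  have hφr : ∀ i : ZMod (2 * q), φ (DihedralGroup.r i) = (homZ i : Rˣ) := fun i => rfl
  have hφsr : ∀ i : ZMod (2 * q), φ (DihedralGroup.sr i) = ((xU * homZ i : Rˣ) : R) :=
    fun i => rfl
  set g : A →ₐ[k] R := MonoidAlgebra.lift k R (DihedralGroup (2 * q)) φ with hg
  have hgsingle : ∀ w : DihedralGroup (2 * q), g (single w (1 : k)) = φ w := by
    intro w
    rw [hg, MonoidAlgebra.lift_single, one_smul]
  have hga : g a = xR := by
    rw [ha, hgsingle, hφsr, hz_zero, mul_one]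
  have hgb : g b = yR := by
    rw [hb, hgsingle, hφsr]
    have h1 : homZ (1 : ZMod (2 * q)) = uU := by
      show uU ^ (1 : ZMod (2 * q)).val = uU
      rw [ZMod.val_one, pow_one]
    rw [h1]
    show xR * CR = yR
    rw [hCR, ← mul_assoc, hxx, one_mul]
  -- f on the generators of the group
  have hfx : f xR = a := by rw [hxR, map_add, map_one, hfX, hone]
  have hfy : f yR = b := by rw [hyR, map_add, map_one, hfY, hone]
  have hfC : f CR = single (DihedralGroup.r (1 : ZMod (2 * q))) (1 : k) := by
    rw [hCR, map_mul, hfx, hfy, hab]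
  -- the compositions are the identity
  have hgf : g.comp f = AlgHom.id k R := by
    apply RingQuot.ringQuot_ext'
    apply FreeAlgebra.hom_ext
    funext i
    fin_cases i
    · show g (f XR) = RingQuot.mkAlgHom k (DihedralRel k q) (FreeAlgebra.ι k (0 : Fin 2))
      rw [← hXR, hfX, map_sub, map_one, hga, hxR, add_sub_cancel_left]
    · show g (f YR) = RingQuot.mkAlgHom k (DihedralRel k q) (FreeAlgebra.ι k (1 : Fin 2))
      rw [← hYR, hfY, map_sub, map_one, hgb, hyR, add_sub_cancel_left]
  have hfg : f.comp g = AlgHom.id k A := by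
    apply MonoidAlgebra.algHom_ext
    rintro (i | i)
    · show f (g (single (DihedralGroup.r i) (1 : k))) = single (DihedralGroup.r i) (1 : k)
      rw [hgsingle, hφr]
      show f ((uU : Rˣ).val ^ i.val) = _
      rw [map_pow]
      show f CR ^ i.val = _
      rw [hfC, MonoidAlgebra.single_pow, one_pow, DihedralGroup.r_one_pow,
        ZMod.natCast_val, ZMod.cast_id]
    · show f (g (single (DihedralGroup.sr i) (1 : k))) = single (DihedralGroup.sr i) (1 : k)
      rw [hgsingle, hφsr]
      show f (xR * (uU : Rˣ).val ^ i.val) = _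
      rw [map_mul, map_pow, hfx]
      show a * f CR ^ i.val = _
      rw [hfC, MonoidAlgebra.single_pow, one_pow, DihedralGroup.r_one_pow,
        ZMod.natCast_val, ZMod.cast_id, ha, MonoidAlgebra.single_mul_single,
        DihedralGroup.sr_mul_r, zero_add, one_mul]
    · exact Subsingleton.elim _ _
  refine ⟨AlgEquiv.ofAlgHom f g hfg hgf, ?_, ?_⟩
  · exact hfX
  · exact hfY
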